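/- Let (S,+) be a countable adequate commutative partial semigroup and let ⟨x_n⟩_{n=1}^∞ be an adequate sequence in S. Then T = ⋂_{m=1}^∞ cl(FS(⟨x_n⟩_{n=m}^∞)) ∩ δS is a nonempty compact subsemigroup of (δS,+); in particular, for all p,q ∈ T one has p+q ∈ T. -/

import Mathlib

namespace PS

variable {S : Type*}

/-- Left-to-right sum of a list in a partial semigroup (`none` on the empty list). -/
def listSum (P : S → S → Option S) : List S → Option S
  | [] => none
  | [a] => some a
  | a :: b :: l => (listSum P (b :: l)).bind fun t => P a t

/-- The partial sum `∑_{t ∈ H} y t`, taken in increasing order of the indices. -/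
def fsum (P : S → S → Option S) (y : ℕ → S) (H : Finset ℕ) : Option S :=
  listSum P ((H.sort (· ≤ ·)).map y)

/-- Associativity of a partial operation, in the strong (Kleene) sense. -/
def Assoc (P : S → S → Option S) : Prop :=
  ∀ a b c : S, (P a b).bind (fun t => P t c) = (P b c).bind fun t => P a t

/-- Commutativity: `a + b = b + a` whenever either side is defined. -/
def Comm (P : S → S → Option S) : Prop := ∀ a b : S, P a b = P b a

/-- `φ(s) = {t : s + t is defined}`. -/
def phi (P : S → S → Option S) (s : S) : Set S := {t | (P s t).isSome}

/-- `σ(H) = ⋂_{s ∈ H} φ(s)`. -/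
def sigma (P : S → S → Option S) (H : Finset S) : Set S :=
  {t | ∀ s ∈ H, (P s t).isSome = true}

/-- An adequate partial semigroup: `σ(H) ≠ ∅` for all finite nonempty `H`. -/
def Adequate (P : S → S → Option S) : Prop :=
  ∀ H : Finset S, H.Nonempty → (sigma P H).Nonempty

/-- `FS(⟨x_n⟩_{n=m}^∞)`. -/
def FSfrom (P : S → S → Option S) (x : ℕ → S) (m : ℕ) : Set S :=
  {s | ∃ H : Finset ℕ, H.Nonempty ∧ (∀ n ∈ H, m ≤ n) ∧ fsum P x H = some s}

/-- `FS` of the first `m` terms of a sequence. -/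
def FSfin (P : S → S → Option S) (x : ℕ → S) (m : ℕ) : Set S :=
  {s | ∃ H : Finset ℕ, H.Nonempty ∧ H ⊆ Finset.range m ∧ fsum P x H = some s}

/-- An adequate sequence. -/
def AdequateSeq (P : S → S → Option S) (x : ℕ → S) : Prop :=
  (∀ F : Finset ℕ, F.Nonempty → (fsum P x F).isSome = true) ∧
  (∀ F : Finset S, F.Nonempty → ∃ m : ℕ, FSfrom P x m ⊆ sigma P F)

/-- `δS ⊆ βS`. -/
def deltaS (P : S → S → Option S) : Set (Ultrafilter S) :=
  {p | ∀ s : S, phi P s ∈ p}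

/-- `-x + A = {y ∈ φ(x) : x + y ∈ A}`. -/
def shift (P : S → S → Option S) (x : S) (A : Set S) : Set S :=
  {y | ∃ z ∈ A, P x y = some z}

/-- `IsSum P r p q` expresses that `r = p + q` in `δS`:
`A ∈ p + q` iff `{x : -x + A ∈ q} ∈ p`. -/
def IsSum (P : S → S → Option S) (r p q : Ultrafilter S) : Prop :=
  ∀ A : Set S, A ∈ r ↔ {x : S | shift P x A ∈ q} ∈ p

/-- A finite product subsystem `⟨y_n⟩_{n<m}` of `FS(⟨x_n⟩_{n=k}^∞)`. -/
def IsProdSubsysFin (P : S → S → Option S) (x : ℕ → S) (k m : ℕ) (y : ℕ → S) : Prop :=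
  ∃ H : ℕ → Finset ℕ,
    (∀ n < m, (H n).Nonempty) ∧
    (∀ t ∈ H 0, k ≤ t) ∧
    (∀ n, n + 1 < m → ∀ s ∈ H n, ∀ t ∈ H (n + 1), s < t) ∧
    (∀ n < m, fsum P x (H n) = some (y n))

/-- An infinite product subsystem `⟨y_n⟩_{n=0}^∞` of `FS(⟨x_n⟩_{n=k}^∞)`. -/
def IsProdSubsysInf (P : S → S → Option S) (x : ℕ → S) (k : ℕ) (y : ℕ → S) : Prop :=
  ∃ H : ℕ → Finset ℕ,
    (∀ n, (H n).Nonempty) ∧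
    (∀ t ∈ H 0, k ≤ t) ∧
    (∀ n, ∀ s ∈ H n, ∀ t ∈ H (n + 1), s < t) ∧
    (∀ n, fsum P x (H n) = some (y n))

/-- `⟨x_n⟩_{n<m}` is a weak product subsystem of `⟨y_n⟩_{n=k}^∞`, witnessed by `H`. -/
def IsWPSWith (P : S → S → Option S) (y : ℕ → S) (k m : ℕ) (x : ℕ → S)
    (H : ℕ → Finset ℕ) : Prop :=
  (∀ n < m, (H n).Nonempty) ∧
  (∀ n < m, ∀ t ∈ H n, k ≤ t) ∧
  (∀ n₁ < m, ∀ n₂ < m, n₁ ≠ n₂ → Disjoint (H n₁) (H n₂)) ∧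
  (∀ n < m, fsum P y (H n) = some (x n))

/-- `⟨x_n⟩_{n<m}` is a weak product subsystem of `⟨y_n⟩_{n=k}^∞`. -/
def IsWPS (P : S → S → Option S) (y : ℕ → S) (k m : ℕ) (x : ℕ → S) : Prop :=
  ∃ H : ℕ → Finset ℕ, IsWPSWith P y k m x H

/-- The coordinatewise partial operation on a finite product, defined exactly when
every coordinate operation is defined. -/
def prodOp {l : ℕ} {T : Fin l → Type*} (P : ∀ i, T i → T i → Option (T i)) :
    (∀ i, T i) → (∀ i, T i) → Option (∀ i, T i) := fun a b =>
  if h : ∀ i, (P i (a i) (b i)).isSome then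
    some fun i => (P i (a i) (b i)).get (h i)
  else none

end PS

namespace PS

variable {S : Type*} {P : S → S → Option S}

lemma listSum_cons (a : S) (l : List S) (hl : l ≠ []) :
    listSum P (a :: l) = (listSum P l).bind fun t => P a t := by
  cases l with
  | nil => exact absurd rfl hl
  | cons b m => rfl

lemma listSum_append (hassoc : Assoc P) :
    ∀ (l₁ l₂ : List S), l₁ ≠ [] → l₂ ≠ [] →
      listSum P (l₁ ++ l₂) =
        (listSum P l₁).bind fun a => (listSum P l₂).bind fun b => P a b
  | [], _, h, _ => absurd rfl h
  | [a], l₂, _, h₂ => by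
    rw [List.singleton_append, listSum_cons a l₂ h₂]
    simp [listSum]
  | a :: b :: l₁, l₂, _, h₂ => by
    have ih := listSum_append hassoc (b :: l₁) l₂ (by simp) h₂
    have h1 : listSum P ((a :: b :: l₁) ++ l₂) =
        (listSum P ((b :: l₁) ++ l₂)).bind fun t => P a t := by
      rw [List.cons_append]
      exact listSum_cons a _ (by simp)
    rw [h1, ih]
    show _ = (listSum P (a :: b :: l₁)).bind _
    rw [listSum_cons a (b :: l₁) (by simp)]
    cases hu : listSum P (b :: l₁) with
    | none => simp
    | some u =>
      cases hv : listSum P l₂ with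
      | none => simp
      | some v => simpa using (hassoc a u v).symm

lemma sort_ne_nil {H : Finset ℕ} (h : H.Nonempty) : H.sort (· ≤ ·) ≠ [] := by
  intro he
  obtain ⟨a, ha⟩ := h
  have := (Finset.mem_sort (α := ℕ) (· ≤ ·)).2 ha
  rw [he] at this
  exact List.not_mem_nil this

lemma sort_union {H K : Finset ℕ} (h : ∀ a ∈ H, ∀ b ∈ K, a < b) :
    (H ∪ K).sort (· ≤ ·) = H.sort (· ≤ ·) ++ K.sort (· ≤ ·) := by
  have hd : Disjoint H K := by
    rw [Finset.disjoint_left]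
    intro a haH haK
    exact lt_irrefl a (h a haH a haK)
  have hperm : List.Perm ((H ∪ K).sort (· ≤ ·)) (H.sort (· ≤ ·) ++ K.sort (· ≤ ·)) := by
    rw [← Multiset.coe_eq_coe]
    have : (H ∪ K).1 = H.1 + K.1 := by
      rw [← Finset.disjUnion_eq_union H K hd]
      rfl
    rw [← Multiset.coe_add, Finset.sort_eq, Finset.sort_eq, Finset.sort_eq, this]
  refine List.Perm.eq_of_pairwise' (Finset.pairwise_sort _ _) ?_ hperm
  rw [List.pairwise_append]
  refine ⟨Finset.pairwise_sort _ _, Finset.pairwise_sort _ _, ?_⟩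
  intro a ha b hb
  exact le_of_lt (h a ((Finset.mem_sort _).1 ha) b ((Finset.mem_sort _).1 hb))

lemma fsum_union (hassoc : Assoc P) (x : ℕ → S) {H K : Finset ℕ}
    (hH : H.Nonempty) (hK : K.Nonempty) (h : ∀ a ∈ H, ∀ b ∈ K, a < b) :
    fsum P x (H ∪ K) =
      (fsum P x H).bind fun a => (fsum P x K).bind fun b => P a b := by
  unfold fsum
  rw [sort_union h, List.map_append]
  exact listSum_append hassoc _ _ (by simp [sort_ne_nil hH]) (by simp [sort_ne_nil hK])

lemma mem_FSfrom_self (x : ℕ → S) (n : ℕ) : x n ∈ FSfrom P x n :=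
  ⟨{n}, Finset.singleton_nonempty n, by simp, by simp [fsum, listSum]⟩

lemma FSfrom_mono (x : ℕ → S) {m n : ℕ} (h : m ≤ n) :
    FSfrom P x n ⊆ FSfrom P x m := by
  rintro s ⟨H, hne, hge, hs⟩
  exact ⟨H, hne, fun t ht => le_trans h (hge t ht), hs⟩

lemma shift_inter (a : S) (A B : Set S) :
    shift P a (A ∩ B) = shift P a A ∩ shift P a B := by
  ext y
  constructor
  · rintro ⟨z, ⟨hzA, hzB⟩, hz⟩
    exact ⟨⟨z, hzA, hz⟩, ⟨z, hzB, hz⟩⟩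
  · rintro ⟨⟨z, hzA, hz⟩, ⟨z', hzB, hz'⟩⟩
    have : z = z' := by rw [hz] at hz'; exact Option.some_injective _ hz'
    exact ⟨z, ⟨hzA, this ▸ hzB⟩, hz⟩

lemma shift_mono (a : S) {A B : Set S} (h : A ⊆ B) : shift P a A ⊆ shift P a B := by
  rintro y ⟨z, hz, h'⟩; exact ⟨z, h hz, h'⟩

lemma shift_univ (a : S) : shift P a Set.univ = phi P a := by
  ext y
  constructor
  · rintro ⟨z, _, hz⟩; simp [phi, hz]
  · intro h
    exact ⟨(P a y).get h, trivial, (Option.some_get h).symm⟩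

/-- Galvin step: if `a ∈ FS(m)` then some tail `FS(k)` is contained in `-a + FS(m)`. -/
lemma galvin (hassoc : Assoc P) {x : ℕ → S}
    (hx1 : ∀ F : Finset ℕ, F.Nonempty → (fsum P x F).isSome = true)
    {m : ℕ} {a : S} (ha : a ∈ FSfrom P x m) :
    ∃ k : ℕ, FSfrom P x k ⊆ shift P a (FSfrom P x m) := by
  obtain ⟨H, hHne, hHge, hHa⟩ := ha
  refine ⟨(H.max' hHne) + 1, ?_⟩
  rintro y ⟨K, hKne, hKge, hKy⟩
  have hlt : ∀ s ∈ H, ∀ t ∈ K, s < t := fun s hs t ht =>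
    lt_of_le_of_lt (H.le_max' s hs) (Nat.lt_of_succ_le (hKge t ht))
  have hu := fsum_union hassoc x hHne hKne hlt
  rw [hHa, hKy] at hu
  simp only [Option.bind_some] at hu
  have hdef := hx1 (H ∪ K) (hHne.mono Finset.subset_union_left)
  rw [hu] at hdef
  refine ⟨(P a y).get hdef, ⟨H ∪ K, hHne.mono Finset.subset_union_left, ?_, ?_⟩,
    (Option.some_get hdef).symm⟩
  · intro t ht
    rcases Finset.mem_union.1 ht with h' | h'
    · exact hHge t h'
    · have hm : m ≤ H.max' hHne := hHge _ (H.max'_mem hHne)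
      exact le_trans hm (le_trans (Nat.le_succ _) (hKge t h'))
  · rw [hu]
    exact (Option.some_get hdef).symm

end PS

open PS Filter

theorem statement1 {S : Type*} [Countable S] (P : S → S → Option S)
    (hassoc : PS.Assoc P) (hcomm : PS.Comm P) (hadeq : PS.Adequate P)
    (x : ℕ → S) (hx : PS.AdequateSeq P x)
    (T : Set (Ultrafilter S))
    (hT : T = {p : Ultrafilter S | (∀ m : ℕ, PS.FSfrom P x m ∈ p) ∧ p ∈ PS.deltaS P}) :
    T.Nonempty ∧ IsCompact T ∧
      ∀ p ∈ T, ∀ q ∈ T,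
        (∃ r : Ultrafilter S, PS.IsSum P r p q) ∧
        (∀ r : Ultrafilter S, PS.IsSum P r p q → r ∈ T) := by
  subst hT
  obtain ⟨hx1, hx2⟩ := hx
  -- the generating family
  set C : Set (Set S) := (Set.range (FSfrom P x)) ∪ (Set.range (phi P)) with hC
  -- every member of the family contains a tail FS-set
  have htail : ∀ A ∈ C, ∃ N, FSfrom P x N ⊆ A := by
    rintro A (⟨m, rfl⟩ | ⟨s, rfl⟩)
    · exact ⟨m, subset_rfl⟩
    · obtain ⟨m, hm⟩ := hx2 {s} (Finset.singleton_nonempty s)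
      exact ⟨m, fun t ht => hm ht s (Finset.mem_singleton_self s)⟩
  -- FIP
  have hFIP : ∀ t ⊆ C, t.Finite → (⋂₀ t).Nonempty := by
    intro t htC htfin
    have : ∃ N, ∀ A ∈ t, FSfrom P x N ⊆ A := by
      refine Set.Finite.induction_on_subset (motive := fun u _ => ∃ N, ∀ A ∈ u, FSfrom P x N ⊆ A) t htfin ⟨0, by simp⟩ ?_
      intro A u hAt _ _ ih
      obtain ⟨N₁, hN₁⟩ := ih
      obtain ⟨N₂, hN₂⟩ := htail A (htC hAt)
      refine ⟨max N₁ N₂, ?_⟩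
      rintro B (rfl | hB)
      · exact (FSfrom_mono x (le_max_right N₁ N₂)).trans hN₂
      · exact (FSfrom_mono x (le_max_left N₁ N₂)).trans (hN₁ B hB)
    obtain ⟨N, hN⟩ := this
    exact ⟨x N, fun A hA => hN A hA (mem_FSfrom_self x N)⟩
  -- nonemptiness of T
  have hne : {p : Ultrafilter S | (∀ m : ℕ, FSfrom P x m ∈ p) ∧ p ∈ deltaS P}.Nonempty := by
    have hNB : NeBot (Filter.generate C) := by
      rw [← forall_mem_nonempty_iff_neBot]
      intro s hs
      obtain ⟨t, htC, htfin, hts⟩ := Filter.mem_generate_iff.1 hs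
      exact (hFIP t htC htfin).mono hts
    obtain ⟨u, hu⟩ := Ultrafilter.exists_le (Filter.generate C)
    refine ⟨u, fun m => ?_, fun s => ?_⟩
    · exact hu (Filter.mem_generate_of_mem (Set.mem_union_left _ ⟨m, rfl⟩))
    · exact hu (Filter.mem_generate_of_mem (Set.mem_union_right _ ⟨s, rfl⟩))
  refine ⟨hne, ?_, ?_⟩
  · -- compactness
    have hcl : IsClosed {p : Ultrafilter S | (∀ m : ℕ, FSfrom P x m ∈ p) ∧ p ∈ deltaS P} := by
      have : {p : Ultrafilter S | (∀ m : ℕ, FSfrom P x m ∈ p) ∧ p ∈ deltaS P} =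
          (⋂ m : ℕ, {p : Ultrafilter S | FSfrom P x m ∈ p}) ∩
            ⋂ s : S, {p : Ultrafilter S | phi P s ∈ p} := by
        ext p
        simp [deltaS, Set.mem_iInter]
      rw [this]
      exact IsClosed.inter (isClosed_iInter fun m => ultrafilter_isClosed_basic _)
        (isClosed_iInter fun s => ultrafilter_isClosed_basic _)
    exact hcl.isCompact
  · -- semigroup part
    rintro p ⟨hpFS, hpδ⟩ q ⟨hqFS, hqδ⟩
    -- the candidate filter
    set Q : Set S → Prop := fun A => {a : S | shift P a A ∈ q} ∈ p with hQ
    have hQuniv : Q Set.univ := by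
      have : {a : S | shift P a Set.univ ∈ q} = Set.univ := by
        ext a
        simp only [Set.mem_setOf_eq, Set.mem_univ, iff_true, shift_univ]
        exact hqδ a
      rw [hQ]; simp only [this]; exact Filter.univ_mem
    have hQmono : ∀ {A B : Set S}, A ⊆ B → Q A → Q B := by
      intro A B hAB hA
      exact Filter.mem_of_superset hA fun a ha => Filter.mem_of_superset ha (shift_mono a hAB)
    have hQinter : ∀ {A B : Set S}, Q A → Q B → Q (A ∩ B) := by
      intro A B hA hB
      have := Filter.inter_mem hA hB
      refine Filter.mem_of_superset this ?_
      rintro a ⟨ha1, ha2⟩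
      show shift P a (A ∩ B) ∈ q
      rw [shift_inter]
      exact Filter.inter_mem ha1 ha2
    have hQnotboth : ∀ A : Set S, Q A → Q Aᶜ → False := by
      intro A hA hA'
      obtain ⟨a, ha1, ha2⟩ := Ultrafilter.nonempty_of_mem (Filter.inter_mem hA hA')
      have : shift P a A ∩ shift P a Aᶜ ∈ q := Filter.inter_mem ha1 ha2
      rw [← shift_inter] at this
      obtain ⟨y, z, hz, -⟩ := Ultrafilter.nonempty_of_mem this
      exact (Set.notMem_compl_iff.2 hz.1).elim (hz.2 : _)
    have hQtotal : ∀ A : Set S, ¬ Q Aᶜ → Q A := by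
      intro A hA'
      have h1 : {a : S | shift P a Aᶜ ∈ q}ᶜ ∈ p := (Ultrafilter.compl_mem_iff_notMem).2 hA'
      refine Filter.mem_of_superset h1 ?_
      intro a ha
      have h2 : (shift P a Aᶜ)ᶜ ∈ q := (Ultrafilter.compl_mem_iff_notMem).2 ha
      have h3 : phi P a ∈ q := hqδ a
      refine Filter.mem_of_superset (Filter.inter_mem h3 h2) ?_
      rintro y ⟨hy1, hy2⟩
      have hz := Option.some_get hy1
      by_cases hzA : (P a y).get hy1 ∈ A
      · exact ⟨_, hzA, hz.symm⟩
      · exact (hy2 ⟨_, hzA, hz.symm⟩).elim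
    -- membership facts for the sum
    have hmemFS : ∀ m : ℕ, Q (FSfrom P x m) := by
      intro m
      refine Filter.mem_of_superset (hpFS m) ?_
      intro a ha
      obtain ⟨k, hk⟩ := galvin hassoc hx1 ha
      exact Filter.mem_of_superset (hqFS k) hk
    have hmemphi : ∀ s : S, Q (phi P s) := by
      intro s
      refine Filter.mem_of_superset (hpδ s) ?_
      intro a ha
      show shift P a (phi P s) ∈ q
      have ha' : (P s a).isSome := ha
      set w := (P s a).get ha' with hw
      have hsw : P s a = some w := (Option.some_get ha').symm
      have hsub : phi P a ∩ phi P w ⊆ shift P a (phi P s) := by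
        rintro y ⟨hy1, hy2⟩
        have hxy : P a y = some ((P a y).get hy1) := (Option.some_get hy1).symm
        refine ⟨(P a y).get hy1, ?_, hxy⟩
        have := hassoc s a y
        rw [hsw, hxy] at this
        simp only [Option.bind_some] at this
        show (P s ((P a y).get hy1)).isSome
        rw [← this]
        exact hy2
      exact Filter.mem_of_superset (Filter.inter_mem (hqδ a) (hqδ w)) hsub
    constructor
    · -- existence of the sum
      refine ⟨Ultrafilter.ofComplNotMemIff
        ⟨{A | Q A}, hQuniv, fun hA hAB => hQmono hAB hA, fun hA hB => hQinter hA hB⟩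
        (fun s => ⟨fun h => hQtotal s h, fun h h' => hQnotboth s h h'⟩), fun A => Iff.rfl⟩
    · -- any sum is in T
      intro r hr
      exact ⟨fun m => (hr (FSfrom P x m)).2 (hmemFS m), fun s => (hr (phi P s)).2 (hmemphi s)⟩
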